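/- In the group ring ℤ[t]/(t^p − 1) for p an odd prime, the ideals (t−1)·R and (1+t+...+t^{p−1})·R are not projective R-modules. -/

import Mathlib

open Polynomial

namespace Stmt9
noncomputable section

variable (p : ℕ)

local notation "R" => ℤ[X] ⧸ Ideal.span ({X ^ p - 1} : Set ℤ[X])
local notation "Q" => Ideal.Quotient.mk (Ideal.span ({X ^ p - 1} : Set ℤ[X]))

/-- evaluation at 1 -/
def ε : R →+* ℤ :=
  Ideal.Quotient.lift _ (evalRingHom 1) (by
    intro a ha
    rw [Ideal.mem_span_singleton] at ha
    obtain ⟨c, rfl⟩ := ha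
    simp)

lemma ε_mk (f : ℤ[X]) : ε p (Q f) = f.eval 1 := Ideal.Quotient.lift_mk _ _ _

/-- An element divisible by all powers of `p` is zero. -/
lemma eq_zero_of_forall_pow_dvd (hp : 1 < p) (x : R)
    (h : ∀ n : ℕ, ∃ d : R, x = (p : R) ^ n * d) : x = 0 := by
  have hm : (X ^ p - 1 : ℤ[X]).Monic := by
    simpa using monic_X_pow_sub_C (1 : ℤ) (by omega)
  let b := (AdjoinRoot.powerBasis' hm).basis
  have key : ∀ i, b.repr x i = 0 := by
    intro i
    have hdvd : ∀ n : ℕ, (p : ℤ) ^ n ∣ b.repr x i := by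
      intro n
      obtain ⟨d, hd⟩ := h n
      have : x = ((p : ℤ) ^ n) • d := by
        rw [hd, zsmul_eq_mul]; push_cast; ring
      rw [this]
      erw [map_smul, Finsupp.smul_apply, smul_eq_mul]
      exact Dvd.intro _ rfl
    set m := b.repr x i with hmdef
    by_contra hne
    have hlt : |m| < (p : ℤ) ^ |m|.toNat := by
      have h1 : |m|.toNat < p ^ |m|.toNat := Nat.lt_pow_self hp
      have : (|m|.toNat : ℤ) < ((p : ℕ) : ℤ) ^ |m|.toNat := by exact_mod_cast h1
      rwa [Int.toNat_of_nonneg (abs_nonneg m)] at this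
    exact hne (Int.eq_zero_of_abs_lt_dvd (hdvd _) hlt)
  have h0 : b.repr x = b.repr 0 := by rw [map_zero]; exact Finsupp.ext key
  exact b.repr.injective h0

end
end Stmt9

namespace Stmt9
noncomputable section
variable (p : ℕ)
local notation "R" => ℤ[X] ⧸ Ideal.span ({X ^ p - 1} : Set ℤ[X])
local notation "Q" => Ideal.Quotient.mk (Ideal.span ({X ^ p - 1} : Set ℤ[X]))

lemma freshman (hp : p.Prime) : ∃ h : ℤ[X], (X - 1 : ℤ[X]) ^ p = (X ^ p - 1) + C (p : ℤ) * h := by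
  have : Fact p.Prime := ⟨hp⟩
  have hdvd : C ((p : ℕ) : ℤ) ∣ ((X - 1 : ℤ[X]) ^ p - (X ^ p - 1)) := by
    rw [C_dvd_iff_dvd_coeff]
    intro i
    have hmap : ((X - 1 : ℤ[X]) ^ p - (X ^ p - 1)).map (Int.castRingHom (ZMod p)) = 0 := by
      push_cast [Polynomial.map_sub, Polynomial.map_pow, Polynomial.map_one, Polynomial.map_X]
      rw [sub_pow_char]
      ring
    have := congrArg (fun q => Polynomial.coeff q i) hmap
    simp only [coeff_map, coeff_zero] at this
    exact_mod_cast (ZMod.intCast_zmod_eq_zero_iff_dvd _ p).mp this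
  obtain ⟨h, hh⟩ := hdvd
  exact ⟨h, by linear_combination hh⟩

lemma idem_eq_zero (hp : p.Prime) (e : R) (he : e * e = e) (hε : ε p e = 0) : e = 0 := by
  obtain ⟨E, rfl⟩ := Ideal.Quotient.mk_surjective e
  -- (X-1) ∣ E
  have hroot : (X - C (1:ℤ)) ∣ E := dvd_iff_isRoot.mpr (by rwa [IsRoot, ← ε_mk])
  rw [C_1] at hroot
  obtain ⟨g, hg⟩ := hroot
  obtain ⟨h, hfresh⟩ := freshman p hp
  -- e^n = e for all n ≥ 1
  have hpow : ∀ n : ℕ, (Q E) ^ (n + 1) = Q E := by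
    intro n; induction n with
    | zero => simp
    | succ n ih => rw [pow_succ, ih, he]
  -- τ^p = p * Q h
  have htau : (Q (X - 1)) ^ p = (p : R) * Q h := by
    rw [← map_pow, hfresh, map_add, map_mul]
    have : Q (X ^ p - 1) = 0 := Ideal.Quotient.eq_zero_iff_mem.mpr
      (Ideal.subset_span rfl)
    rw [this, zero_add, show (C ((p:ℕ):ℤ) : ℤ[X]) = ((p:ℕ) : ℤ[X]) by simp,
      map_natCast]
  -- e = p * c
  have hc : ∃ c : R, Q E = (p : R) * c := by
    have h1 : Q E = (Q E) ^ p := by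
      conv_lhs => rw [← hpow (p - 1)]
      rw [Nat.sub_add_cancel hp.one_le]
    refine ⟨Q h * (Q g) ^ p, ?_⟩
    rw [h1, hg, map_mul, mul_pow, htau]; ring
  obtain ⟨c, hc⟩ := hc
  apply eq_zero_of_forall_pow_dvd p hp.one_lt
  intro n
  match n with
  | 0 => exact ⟨Q E, by simp⟩
  | n + 1 =>
    refine ⟨c ^ (n + 1), ?_⟩
    calc Q E = (Q E) ^ (n + 1) := (hpow n).symm
    _ = ((p:R) * c) ^ (n+1) := by rw [hc]
    _ = (p:R) ^ (n+1) * c ^ (n+1) := mul_pow _ _ _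

end
end Stmt9

namespace Stmt9
noncomputable section
variable (p : ℕ)
local notation "R" => ℤ[X] ⧸ Ideal.span ({X ^ p - 1} : Set ℤ[X])
local notation "Q" => Ideal.Quotient.mk (Ideal.span ({X ^ p - 1} : Set ℤ[X]))
local notation "S" => (∑ i ∈ Finset.range p, (X : ℤ[X]) ^ i)

lemma factored : (X ^ p - 1 : ℤ[X]) = S * (X - 1) := (geom_sum_mul X p).symm

lemma tau_sigma : Q (X - 1) * Q S = 0 := by
  rw [← map_mul, mul_comm, ← factored]
  exact Ideal.Quotient.eq_zero_iff_mem.mpr (Ideal.subset_span rfl)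

lemma X_sub_one_ne : (X - 1 : ℤ[X]) ≠ 0 := by
  intro h
  have := congrArg (fun q => Polynomial.eval 0 q) h
  simp at this

lemma S_ne (hp : p ≠ 0) : (S : ℤ[X]) ≠ 0 := by
  intro h
  have := congrArg (fun q => Polynomial.eval 1 q) h
  simp at this
  omega

lemma tau_ne (hp : 1 < p) : Q (X - 1) ≠ 0 := by
  intro h
  rw [Ideal.Quotient.eq_zero_iff_mem, Ideal.mem_span_singleton] at h
  have := natDegree_le_of_dvd h X_sub_one_ne
  rw [show (X ^ p - 1 : ℤ[X]) = X ^ p - C 1 by rw [C_1], natDegree_X_pow_sub_C] at this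
  have h1 : (X - 1 : ℤ[X]).natDegree = 1 := by
    rw [show (X - 1 : ℤ[X]) = X - C 1 by rw [C_1]]
    exact natDegree_X_sub_C 1
  omega

/-- if τ * x = 0 then x ∈ span {σ} -/
lemma ker_tau (x : R) (hx : Q (X - 1) * x = 0) : ∃ m : R, x = m * Q S := by
  obtain ⟨r, rfl⟩ := Ideal.Quotient.mk_surjective x
  rw [← map_mul, Ideal.Quotient.eq_zero_iff_mem, Ideal.mem_span_singleton] at hx
  obtain ⟨q, hq⟩ := hx
  rw [factored] at hq
  have : (X - 1 : ℤ[X]) * r = (X - 1) * (S * q) := by linear_combination hq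
  have hr : r = S * q := mul_left_cancel₀ X_sub_one_ne this
  exact ⟨Q q, by rw [hr, map_mul, mul_comm]⟩

/-- if σ * x = 0 then x ∈ span {τ} -/
lemma ker_sigma (hp : p ≠ 0) (x : R) (hx : Q S * x = 0) : ∃ m : R, x = m * Q (X - 1) := by
  obtain ⟨r, rfl⟩ := Ideal.Quotient.mk_surjective x
  rw [← map_mul, Ideal.Quotient.eq_zero_iff_mem, Ideal.mem_span_singleton] at hx
  obtain ⟨q, hq⟩ := hx
  rw [factored] at hq
  have : (S : ℤ[X]) * r = S * ((X - 1) * q) := by linear_combination hq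
  have hr : r = (X - 1) * q := mul_left_cancel₀ (S_ne p hp) this
  exact ⟨Q q, by rw [hr, map_mul, mul_comm]⟩

lemma eval_S : (S : ℤ[X]).eval 1 = p := by simp

end
end Stmt9

namespace Stmt9
noncomputable section
variable (p : ℕ)
local notation "R" => ℤ[X] ⧸ Ideal.span ({X ^ p - 1} : Set ℤ[X])
local notation "Q" => Ideal.Quotient.mk (Ideal.span ({X ^ p - 1} : Set ℤ[X]))
local notation "S" => (∑ i ∈ Finset.range p, (X : ℤ[X]) ^ i)

lemma not_proj_gen (a : R)
    (key : ∀ u : R, u * a = a → (∀ r : R, r * a = 0 → r * u = 0) → False) :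
    ¬ Module.Projective R ↥(Ideal.span ({a} : Set R)) := by
  intro hP
  have hmem : a ∈ Ideal.span ({a} : Set R) := Submodule.mem_span_singleton_self a
  let f : R →ₗ[R] ↥(Ideal.span ({a} : Set R)) :=
    LinearMap.codRestrict _ (LinearMap.toSpanSingleton R R a)
      (fun r => Submodule.smul_mem _ r hmem)
  have hfa : ∀ r : R, ((f r : R)) = r * a := fun r => by
    rfl
  have fsurj : Function.Surjective f := by
    rintro ⟨x, hx⟩
    rw [Ideal.mem_span_singleton'] at hx
    obtain ⟨r, hr⟩ := hx
    exact ⟨r, Subtype.ext (by rw [hfa]; exact hr)⟩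
  obtain ⟨s, hs⟩ := Module.projective_lifting_property f LinearMap.id fsurj
  set u : R := s ⟨a, hmem⟩ with hu
  have h1 : u * a = a := by
    have h := congrArg (fun g => g ⟨a, hmem⟩) hs
    have h' : f (s ⟨a, hmem⟩) = ⟨a, hmem⟩ := h
    have h'' := Subtype.ext_iff.mp h'
    rwa [hfa] at h''
  have h2 : ∀ r : R, r * a = 0 → r * u = 0 := by
    intro r hr
    have hf : f r = 0 := Subtype.ext (by rw [hfa]; exact hr)
    have hfr : f r = r • (⟨a, hmem⟩ : ↥(Ideal.span ({a} : Set R))) := Subtype.ext (by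
      rw [hfa, Submodule.coe_smul, smul_eq_mul])
    have h3 : s (f r) = r * u := by rw [hfr, map_smul, smul_eq_mul, hu]
    rw [hf, map_zero] at h3
    exact h3.symm
  exact key u h1 h2

lemma not_proj_tau (hp : p.Prime) :
    ¬ Module.Projective R ↥(Ideal.span ({Q (X - 1)} : Set R)) := by
  apply not_proj_gen p
  intro u h1 h2
  have hσu : Q S * u = 0 := h2 _ (by rw [mul_comm]; exact tau_sigma p)
  have hτ1u : Q (X - 1) * (1 - u) = 0 := by
    have h1' : Q (X - 1) * u = Q (X - 1) := by rw [mul_comm]; exact h1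
    rw [mul_sub, h1', mul_one, sub_self]
  obtain ⟨m, hm⟩ := ker_tau p _ hτ1u
  have hidem : u * u = u := by
    have h0 : u * (1 - u) = 0 := by
      rw [hm, show u * (m * Q S) = m * (Q S * u) by ring, hσu, mul_zero]
    linear_combination -h0
  have hεu : ε p u = 0 := by
    have h4 := congrArg (ε p) hσu
    rw [map_mul, map_zero, ε_mk, eval_S] at h4
    have hp0 : (p : ℤ) ≠ 0 := by exact_mod_cast hp.ne_zero
    exact (mul_eq_zero.mp h4).resolve_left hp0
  have h5 := idem_eq_zero p hp u hidem hεu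
  rw [h5, zero_mul] at h1
  exact tau_ne p hp.one_lt h1.symm

lemma not_proj_sigma (hp : p.Prime) :
    ¬ Module.Projective R ↥(Ideal.span ({Q S} : Set R)) := by
  apply not_proj_gen p
  intro u h1 h2
  have hτu : Q (X - 1) * u = 0 := h2 _ (tau_sigma p)
  have hσ1u : Q S * (1 - u) = 0 := by
    rw [mul_sub, mul_comm (Q S) u, h1, mul_one, sub_self]
  obtain ⟨m, hm⟩ := ker_sigma p hp.ne_zero _ hσ1u
  have hidem : (1 - u) * (1 - u) = (1 - u) := by
    linear_combination (-u) * hm - m * hτu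
  have hεv : ε p (1 - u) = 0 := by
    rw [hm, map_mul, ε_mk]
    simp
  have hv0 := idem_eq_zero p hp _ hidem hεv
  have hu1 : u = 1 := by linear_combination -hv0
  rw [hu1, mul_one] at hτu
  exact tau_ne p hp.one_lt hτu

end
end Stmt9

/-- In `R = ℤ[t]/(tᵖ - 1)`, `p` an odd prime, the ideals `(t-1)R` and
`(1 + t + ⋯ + tᵖ⁻¹)R` are not projective `R`-modules. -/
theorem stmt_9 (p : ℕ) (hp : p.Prime) (hodd : Odd p) :
    ¬ Module.Projective (Polynomial ℤ ⧸ Ideal.span ({Polynomial.X ^ p - 1} : Set (Polynomial ℤ)))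
      ↥(Ideal.span
        ({(Ideal.Quotient.mk (Ideal.span ({Polynomial.X ^ p - 1} : Set (Polynomial ℤ)))) Polynomial.X - 1} :
          Set (Polynomial ℤ ⧸ Ideal.span ({Polynomial.X ^ p - 1} : Set (Polynomial ℤ))))) ∧
    ¬ Module.Projective (Polynomial ℤ ⧸ Ideal.span ({Polynomial.X ^ p - 1} : Set (Polynomial ℤ)))
      ↥(Ideal.span
        ({∑ i ∈ Finset.range p,
          ((Ideal.Quotient.mk (Ideal.span ({Polynomial.X ^ p - 1} : Set (Polynomial ℤ)))) Polynomial.X) ^ i} :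
          Set (Polynomial ℤ ⧸ Ideal.span ({Polynomial.X ^ p - 1} : Set (Polynomial ℤ))))) := by
  constructor
  · have h := Stmt9.not_proj_tau p hp
    rwa [map_sub, map_one] at h
  · have h := Stmt9.not_proj_sigma p hp
    rwa [map_sum] at h
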